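/- Let A be a divisible additive commutative group, let f be an additive group endomorphism of A, and let F₀, F₁, …, F_r ∈ ℤ[X] be polynomials that are pairwise coprime in ℚ[X]. Suppose that (F₀·F₁⋯F_r)(f) = 0 as an endomorphism of A. For each i, set A_i = image of (∏_{j≠i} F_j)(f). Then: (i) every element of A can be written as a sum a₀ + a₁ + ⋯ + a_r with a_i ∈ A_i for all i; and (ii) there exists an integer n > 0 such that whenever a_i ∈ A_i for all i and a₀ + a₁ + ⋯ + a_r = 0, one has n·a_i = 0 for every i. -/

import Mathlib

open Polynomial Finset

/-- Multi-factor splitting lemma: if `F₀, …, F_r ∈ ℤ[X]` are pairwise coprime in `ℚ[X]`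
and `(∏ i, F i)(f) = 0` on a divisible abelian group `A`, then with
`A_i = im ((∏_{j ≠ i} F j)(f))`, every element of `A` is a sum `a₀ + ⋯ + a_r` with
`a_i ∈ A_i`, and relations among such sums are killed by a fixed positive integer. -/
theorem stmt_3 (A : Type*) [AddCommGroup A]
    (hdiv : ∀ n : ℤ, 0 < n → ∀ a : A, ∃ b : A, n • b = a)
    (f : AddMonoid.End A) (r : ℕ) (F : Fin (r + 1) → Polynomial ℤ)
    (hcop : ∀ i j, i ≠ j →
      IsCoprime ((F i).map (Int.castRingHom ℚ)) ((F j).map (Int.castRingHom ℚ)))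
    (hker : Polynomial.aeval f (∏ i, F i) = 0) :
    (∀ x : A, ∃ a : Fin (r + 1) → A,
        (∀ i, a i ∈ Set.range
          (Polynomial.aeval f (∏ j ∈ univ.erase i, F j) : AddMonoid.End A)) ∧
        ∑ i, a i = x) ∧
      (∃ n : ℤ, 0 < n ∧ ∀ a : Fin (r + 1) → A,
        (∀ i, a i ∈ Set.range
          (Polynomial.aeval f (∏ j ∈ univ.erase i, F j) : AddMonoid.End A)) →
        ∑ i, a i = 0 → ∀ i, n • a i = 0) := by
  classical
  set G : Fin (r + 1) → Polynomial ℤ := fun i => ∏ j ∈ univ.erase i, F j with hGdef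
  -- Bezout over ℚ
  have hpair : Pairwise (Function.onFun IsCoprime fun i => (F i).map (Int.castRingHom ℚ)) :=
    fun i j hij => hcop i j hij
  obtain ⟨μ, hμ⟩ :=
    (exists_sum_eq_one_iff_pairwise_coprime'
      (s := fun i => (F i).map (Int.castRingHom ℚ))).2 hpair
  -- clear denominators
  have hnorm : ∀ i, ∃ b : nonZeroDivisors ℤ,
      ((IsLocalization.integerNormalization (nonZeroDivisors ℤ) (μ i)).map
        (algebraMap ℤ ℚ)) = ((b : ℤ)) • μ i :=
    fun i => IsLocalization.integerNormalization_map_to_map (nonZeroDivisors ℤ) (μ i)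
  choose c hc using hnorm
  set v : Fin (r + 1) → Polynomial ℤ :=
    fun i => IsLocalization.integerNormalization (nonZeroDivisors ℤ) (μ i) with hvdef
  have hcne : ∀ i, ((c i : ℤ)) ≠ 0 := fun i => nonZeroDivisors.coe_ne_zero (c i)
  set m : ℤ := ∏ i, (c i : ℤ) with hmdef
  have hm0 : m ≠ 0 := Finset.prod_ne_zero_iff.2 fun i _ => hcne i
  set w : Fin (r + 1) → Polynomial ℤ :=
    fun i => (∏ j ∈ univ.erase i, (c j : ℤ)) • v i with hwdef
  have hwmap : ∀ i, (w i).map (Int.castRingHom ℚ) = m • μ i := by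
    intro i
    have : (v i).map (algebraMap ℤ ℚ) = ((c i : ℤ)) • μ i := hc i
    rw [hwdef]
    simp only [zsmul_eq_mul, Polynomial.map_mul, Polynomial.map_intCast]
    rw [show (Int.castRingHom ℚ) = algebraMap ℤ ℚ from rfl, this, hmdef,
      ← Finset.mul_prod_erase univ _ (mem_univ i)]
    rw [zsmul_eq_mul]
    push_cast
    ring
  -- the integral Bezout identity
  have key : (∑ i, w i * G i) = Polynomial.C m := by
    apply Polynomial.map_injective (Int.castRingHom ℚ) (Int.cast_injective)
    rw [Polynomial.map_sum, Polynomial.map_C]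
    have : ∀ i : Fin (r + 1),
        (G i).map (Int.castRingHom ℚ) = ∏ j ∈ univ.erase i, (F j).map (Int.castRingHom ℚ) := by
      intro i; rw [hGdef]; exact Polynomial.map_prod _ _ _
    calc (∑ i, ((w i * G i).map (Int.castRingHom ℚ)))
        = ∑ i, m • (μ i * ∏ j ∈ {i}ᶜ, (F j).map (Int.castRingHom ℚ)) := by
          refine Finset.sum_congr rfl fun i _ => ?_
          rw [Polynomial.map_mul, hwmap i, this i, smul_mul_assoc]
          congr 1
          congr 1
          rw [Finset.compl_eq_univ_sdiff, Finset.sdiff_singleton_eq_erase]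
      _ = m • (1 : Polynomial ℚ) := by rw [← Finset.smul_sum, hμ]
      _ = Polynomial.C (m : ℚ) := by
          rw [zsmul_eq_mul, mul_one]
          simp [Polynomial.C_eq_intCast]
  -- cross terms vanish
  have crossP : ∀ i j : Fin (r + 1), i ≠ j → (Polynomial.aeval f (G i * G j) : AddMonoid.End A) = 0 := by
    intro i j hij
    have hdvd : (∏ k, F k) ∣ G i * G j := by
      have h1 : F i ∣ G j := Finset.dvd_prod_of_mem F (Finset.mem_erase.2 ⟨hij, mem_univ i⟩)
      obtain ⟨q, hq⟩ := h1
      refine ⟨q, ?_⟩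
      rw [hq, ← Finset.mul_prod_erase univ F (mem_univ i)]
      show G i * (F i * q) = F i * G i * q
      ring
    obtain ⟨q, hq⟩ := hdvd
    rw [hq, map_mul, hker, zero_mul]
  have cross : ∀ i j : Fin (r + 1), i ≠ j → ∀ b : A,
      (Polynomial.aeval f (G j) : AddMonoid.End A) ((Polynomial.aeval f (G i) : AddMonoid.End A) b) = 0 := by
    intro i j hij b
    have : ((Polynomial.aeval f (G j) : AddMonoid.End A) *
        (Polynomial.aeval f (G i) : AddMonoid.End A)) b = 0 := by
      rw [← map_mul, mul_comm, crossP i j hij]; rfl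
    exact this
  -- evaluation of the Bezout identity
  have keyf : ∀ b : A,
      (∑ i, (Polynomial.aeval f (w i * G i) : AddMonoid.End A) b) = m • b := by
    intro b
    have h1 : (Polynomial.aeval f (∑ i, w i * G i) : AddMonoid.End A) b
        = (Polynomial.aeval f (Polynomial.C m) : AddMonoid.End A) b := by rw [key]
    rw [map_sum] at h1
    erw [AddMonoidHom.finset_sum_apply] at h1
    erw [h1]
    simp only [Polynomial.aeval_C]
    show ((m : ℤ) • (1 : AddMonoid.End A) : AddMonoid.End A) b = m • b
    erw [AddMonoidHom.smul_apply]
    rfl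
  have evGW : ∀ (i : Fin (r + 1)) (b : A),
      (Polynomial.aeval f (w i * G i) : AddMonoid.End A) b
        = (Polynomial.aeval f (G i) : AddMonoid.End A)
            ((Polynomial.aeval f (w i) : AddMonoid.End A) b) := by
    intro i b
    rw [mul_comm, map_mul]
    rfl
  have evWG : ∀ (i : Fin (r + 1)) (b : A),
      (Polynomial.aeval f (w i * G i) : AddMonoid.End A) b
        = (Polynomial.aeval f (w i) : AddMonoid.End A)
            ((Polynomial.aeval f (G i) : AddMonoid.End A) b) := by
    intro i b
    rw [map_mul]
    rfl
  constructor
  · -- surjectivity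
    intro x
    have hbex : ∃ b : A, m • b = x := by
      rcases lt_or_gt_of_ne hm0 with h | h
      · obtain ⟨b, hb⟩ := hdiv (-m) (by omega) x
        exact ⟨-b, by rw [smul_neg, ← neg_smul, hb]⟩
      · exact hdiv m h x
    obtain ⟨b, hb⟩ := hbex
    refine ⟨fun i => (Polynomial.aeval f (G i) : AddMonoid.End A)
      ((Polynomial.aeval f (w i) : AddMonoid.End A) b), fun i => ⟨_, rfl⟩, ?_⟩
    rw [Finset.sum_congr rfl fun i _ => (evGW i b).symm, keyf b, hb]
  · -- finite exponent of relations
    refine ⟨|m|, abs_pos.2 hm0, ?_⟩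
    intro a ha hsum i
    choose b hbspec using fun j => ha j
    have hGa : ∀ j : Fin (r + 1), j ≠ i →
        (Polynomial.aeval f (G j) : AddMonoid.End A) (a i) = 0 := by
      intro j hj
      rw [← hbspec i]
      exact cross i j (fun h => hj h.symm) (b i)
    have hGi : (Polynomial.aeval f (G i) : AddMonoid.End A) (a i) = 0 := by
      have hai : a i = -∑ j ∈ univ.erase i, a j := by
        have h := Finset.add_sum_erase univ a (mem_univ i)
        rw [hsum] at h
        exact eq_neg_of_add_eq_zero_left h
      rw [hai, map_neg, map_sum]
      rw [Finset.sum_eq_zero, neg_zero]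
      intro j hj
      rw [← hbspec j]
      exact cross j i (Finset.ne_of_mem_erase hj) (b j)
    have hm : m • a i = 0 := by
      rw [← keyf (a i)]
      refine Finset.sum_eq_zero fun j _ => ?_
      rw [evWG j (a i)]
      by_cases hji : j = i
      · rw [hji, hGi, map_zero]
      · rw [hGa j hji, map_zero]
    rcases abs_choice m with h | h
    · rw [h]; exact hm
    · rw [h, neg_smul, hm, neg_zero]
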